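/- arXiv:2012.02390 — 4 statements merged into one kernel-verified Lean document; each statement's English description precedes it below -/
import Mathlib

section
/- Let Y₀, Y₁ be integrable random variables with quantile functions Q₀, Q₁, and let Δ⁻ be a random variable distributed as Q₁(V) − Q₀(1−V) for V uniform on [0,1] (the countermonotonic treatment effect). Then for every joint coupling (Ŷ₀, Ŷ₁) with the given marginals, the difference Δ = Ŷ₁ − Ŷ₀ satisfies I_Δ(q) ≥ I_{Δ⁻}(q) for all q ∈ [0,1], i.e., Δ ⪰_SSD Δ⁻. -/
open MeasureTheory ProbabilityTheory Set

/-- Quantile function of a measure on ℝ. -/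
noncomputable def quantileFn (μ : Measure ℝ) (q : ℝ) : ℝ :=
  sInf {x : ℝ | q ≤ (μ (Set.Iic x)).toReal}

/-- Integrated quantile function. -/
noncomputable def iqf (μ : Measure ℝ) (q : ℝ) : ℝ :=
  ∫ s in (0:ℝ)..q, quantileFn μ s

/-- The uniform distribution on `[0,1]`. -/
noncomputable def unif01 : Measure ℝ := volume.restrict (Set.Icc (0:ℝ) 1)

section aux
variable (μ : Measure ℝ) [IsProbabilityMeasure μ]

lemma qset_eq (q : ℝ) : {x : ℝ | q ≤ (μ (Set.Iic x)).toReal} = {x : ℝ | q ≤ cdf μ x} := by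
  simp only [cdf_eq_real, measureReal_def]

lemma qset_bddBelow {q : ℝ} (hq : 0 < q) : BddBelow {x : ℝ | q ≤ (μ (Set.Iic x)).toReal} := by
  rw [qset_eq]
  obtain ⟨x₀, hx₀⟩ : ∃ x₀ : ℝ, cdf μ x₀ < q := by
    have := (tendsto_cdf_atBot μ).eventually (eventually_lt_nhds hq)
    exact this.exists
  refine ⟨x₀, fun y hy => ?_⟩
  by_contra h
  push_neg at h
  exact absurd (le_trans hy ((monotone_cdf μ) h.le)) (not_le.mpr hx₀)

lemma qset_nonempty {q : ℝ} (hq : q < 1) : ({x : ℝ | q ≤ (μ (Set.Iic x)).toReal}).Nonempty := by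
  rw [qset_eq]
  obtain ⟨x₀, hx₀⟩ : ∃ x₀ : ℝ, q < cdf μ x₀ := by
    have := (tendsto_cdf_atTop μ).eventually (eventually_gt_nhds hq)
    exact this.exists
  exact ⟨x₀, hx₀.le⟩

lemma quantile_le_iff {q x : ℝ} (hq : 0 < q) (hq1 : q < 1) :
    quantileFn μ q ≤ x ↔ q ≤ cdf μ x := by
  constructor
  · intro h
    have key : ∀ y, x < y → q ≤ cdf μ y := by
      intro y hy
      have : sInf {x : ℝ | q ≤ (μ (Set.Iic x)).toReal} < y := lt_of_le_of_lt h hy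
      obtain ⟨z, hz, hzy⟩ := (csInf_lt_iff (qset_bddBelow μ hq) (qset_nonempty μ hq1)).mp this
      rw [qset_eq] at hz
      exact le_trans hz ((monotone_cdf μ) hzy.le)
    have hrc : ContinuousWithinAt (cdf μ) (Ici x) x := (cdf μ).right_continuous x
    have ht : Filter.Tendsto (cdf μ) (nhdsWithin x (Ioi x)) (nhds (cdf μ x)) :=
      hrc.tendsto.mono_left (nhdsWithin_mono x Ioi_subset_Ici_self)
    exact ge_of_tendsto ht (Filter.eventually_of_mem self_mem_nhdsWithin key)
  · intro h
    refine csInf_le (qset_bddBelow μ hq) ?_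
    rw [qset_eq]; exact h

lemma le_cdf_quantile {q : ℝ} (hq : 0 < q) (hq1 : q < 1) : q ≤ cdf μ (quantileFn μ q) :=
  (quantile_le_iff μ hq hq1).mp le_rfl

lemma quantile_monoOn : MonotoneOn (quantileFn μ) (Ioo (0:ℝ) 1) := by
  intro a ha b hb hab
  exact csInf_le_csInf (qset_bddBelow μ ha.1) (qset_nonempty μ hb.2)
    (fun x hx => le_trans hab hx)

lemma quantile_le_of_le_cdf {q x : ℝ} (hq : 0 < q) (h : q ≤ (μ (Set.Iic x)).toReal) :
    quantileFn μ q ≤ x :=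
  csInf_le (qset_bddBelow μ hq) h

end aux


instance : IsProbabilityMeasure unif01 := by
  constructor
  rw [unif01, Measure.restrict_apply_univ, Real.volume_Icc]
  norm_num

lemma unif01_eq_Ioo : unif01 = volume.restrict (Ioo (0:ℝ) 1) :=
  (Measure.restrict_congr_set (Ioo_ae_eq_Icc)).symm

lemma aemeasurable_of_monoOn_Ioo {f : ℝ → ℝ} (hf : MonotoneOn f (Ioo (0:ℝ) 1)) :
    AEMeasurable f unif01 := by
  rw [unif01_eq_Ioo]
  exact aemeasurable_restrict_of_monotoneOn measurableSet_Ioo hf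

variable (μ : Measure ℝ) [IsProbabilityMeasure μ]

lemma quantile_aemeasurable : AEMeasurable (quantileFn μ) unif01 :=
  aemeasurable_of_monoOn_Ioo (quantile_monoOn μ)

lemma map_quantile_unif01 : Measure.map (quantileFn μ) unif01 = μ := by
  have hmeas : AEMeasurable (quantileFn μ) unif01 := quantile_aemeasurable μ
  have hprob : IsProbabilityMeasure (Measure.map (quantileFn μ) unif01) :=
    Measure.isProbabilityMeasure_map hmeas
  refine Measure.ext_of_Iic _ _ (fun x => ?_)
  rw [Measure.map_apply_of_aemeasurable hmeas measurableSet_Iic, unif01_eq_Ioo,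
    Measure.restrict_apply₀' measurableSet_Ioo.nullMeasurableSet]
  have hF0 : 0 ≤ cdf μ x := cdf_nonneg μ x
  have hF1 : cdf μ x ≤ 1 := cdf_le_one μ x
  have hset_sub : quantileFn μ ⁻¹' Iic x ∩ Ioo 0 1 ⊆ Ioc 0 (cdf μ x) := by
    rintro v ⟨hv1, hv2⟩
    simp only [mem_preimage, mem_Iic] at hv1
    exact ⟨hv2.1, (quantile_le_iff μ hv2.1 hv2.2).mp hv1⟩
  have hset_sup : Ioo 0 (cdf μ x) ⊆ quantileFn μ ⁻¹' Iic x ∩ Ioo 0 1 := by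
    rintro v ⟨hv1, hv2⟩
    have hv3 : v < 1 := lt_of_lt_of_le hv2 hF1
    refine ⟨?_, hv1, hv3⟩
    simp only [mem_preimage, mem_Iic]
    exact (quantile_le_iff μ hv1 hv3).mpr hv2.le
  have h1 : volume (quantileFn μ ⁻¹' Iic x ∩ Ioo 0 1) ≤ ENNReal.ofReal (cdf μ x) := by
    calc volume (quantileFn μ ⁻¹' Iic x ∩ Ioo 0 1) ≤ volume (Ioc 0 (cdf μ x)) :=
          measure_mono hset_sub
      _ = ENNReal.ofReal (cdf μ x) := by rw [Real.volume_Ioc, sub_zero]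
  have h2 : ENNReal.ofReal (cdf μ x) ≤ volume (quantileFn μ ⁻¹' Iic x ∩ Ioo 0 1) := by
    calc ENNReal.ofReal (cdf μ x) = volume (Ioo 0 (cdf μ x)) := by
          rw [Real.volume_Ioo, sub_zero]
      _ ≤ _ := measure_mono hset_sup
  rw [le_antisymm h1 h2, ofReal_cdf]


lemma unif01_eq_Ioc : unif01 = volume.restrict (Ioc (0:ℝ) 1) :=
  (Measure.restrict_congr_set (Ioc_ae_eq_Icc)).symm

lemma integral_unif01_eq (g : ℝ → ℝ) : ∫ s, g s ∂unif01 = ∫ s in (0:ℝ)..(1:ℝ), g s := by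
  rw [intervalIntegral.integral_of_le zero_le_one, ← unif01_eq_Ioc]

variable (hμ : Integrable (fun x : ℝ => x) μ)

lemma integral_comp_quantile {g : ℝ → ℝ} (hg : Continuous g) :
    ∫ x, g x ∂μ = ∫ s, g (quantileFn μ s) ∂unif01 := by
  conv_lhs => rw [← map_quantile_unif01 μ]
  exact integral_map (quantile_aemeasurable μ) hg.aestronglyMeasurable

include hμ in
lemma quantile_integrable : Integrable (quantileFn μ) unif01 := by
  have h : Integrable (fun x : ℝ => x) (Measure.map (quantileFn μ) unif01) := by
    rw [map_quantile_unif01]; exact hμ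
  have := (integrable_map_measure aestronglyMeasurable_id (quantile_aemeasurable μ)).mp h
  exact this

include hμ in
lemma quantile_integrableOn : IntegrableOn (quantileFn μ) (Icc (0:ℝ) 1) volume :=
  quantile_integrable μ hμ

include hμ in
lemma quantile_intervalIntegrable {a b : ℝ} (ha : a ∈ Icc (0:ℝ) 1) (hb : b ∈ Icc (0:ℝ) 1) :
    IntervalIntegrable (quantileFn μ) volume a b := by
  rw [intervalIntegrable_iff']
  exact (quantile_integrableOn μ hμ).mono_set
    (uIcc_subset_Icc ha hb)

include hμ in
lemma integral_quantile_mean : ∫ s in (0:ℝ)..(1:ℝ), quantileFn μ s = ∫ x, x ∂μ := by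
  rw [show (fun x : ℝ => x) = id from rfl] at *
  rw [integral_comp_quantile μ continuous_id, integral_unif01_eq]
  rfl


include hμ in
lemma pospart_integrable_unif (c : ℝ) :
    Integrable (fun s => max (c - quantileFn μ s) 0) unif01 :=
  ((integrable_const c).sub (quantile_integrable μ hμ)).pos_part

include hμ in
lemma pospart_integral_eq (c : ℝ) :
    ∫ x, max (c - x) 0 ∂μ = ∫ s in (0:ℝ)..(1:ℝ), max (c - quantileFn μ s) 0 := by
  rw [integral_comp_quantile μ (g := fun x => max (c - x) 0) (by continuity), integral_unif01_eq]

include hμ in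
lemma pospart_intervalIntegrable (c : ℝ) {a b : ℝ} (ha : a ∈ Icc (0:ℝ) 1)
    (hb : b ∈ Icc (0:ℝ) 1) :
    IntervalIntegrable (fun s => max (c - quantileFn μ s) 0) volume a b := by
  rw [intervalIntegrable_iff']
  have : IntegrableOn (fun s => max (c - quantileFn μ s) 0) (Icc (0:ℝ) 1) volume :=
    pospart_integrable_unif μ hμ c
  exact this.mono_set (uIcc_subset_Icc ha hb)

include hμ in
lemma star {q c : ℝ} (hq : 0 < q) (hq1 : q ≤ 1) :
    q * c - ∫ x, max (c - x) 0 ∂μ ≤ ∫ s in (0:ℝ)..q, quantileFn μ s := by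
  have hqI : q ∈ Icc (0:ℝ) 1 := ⟨hq.le, hq1⟩
  have h0I : (0:ℝ) ∈ Icc (0:ℝ) 1 := ⟨le_refl 0, zero_le_one⟩
  have h1I : (1:ℝ) ∈ Icc (0:ℝ) 1 := ⟨zero_le_one, le_refl 1⟩
  have hQi := quantile_intervalIntegrable μ hμ h0I hqI
  have hGi := pospart_intervalIntegrable μ hμ c h0I hqI
  have step1 : ∫ s in (0:ℝ)..q, (c - max (c - quantileFn μ s) 0) ≤
      ∫ s in (0:ℝ)..q, quantileFn μ s := by
    apply intervalIntegral.integral_mono_on hq.le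
      ((intervalIntegrable_const).sub hGi) hQi
    intro s _
    have : c - quantileFn μ s ≤ max (c - quantileFn μ s) 0 := le_max_left _ _
    linarith
  have step2 : ∫ s in (0:ℝ)..q, (c - max (c - quantileFn μ s) 0) =
      q * c - ∫ s in (0:ℝ)..q, max (c - quantileFn μ s) 0 := by
    rw [intervalIntegral.integral_sub intervalIntegrable_const hGi,
      intervalIntegral.integral_const]
    simp [mul_comm]
  have step3 : ∫ s in (0:ℝ)..q, max (c - quantileFn μ s) 0 ≤
      ∫ s in (0:ℝ)..(1:ℝ), max (c - quantileFn μ s) 0 := by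
    have hsplit : (∫ s in (0:ℝ)..q, max (c - quantileFn μ s) 0) +
        ∫ s in q..(1:ℝ), max (c - quantileFn μ s) 0 =
        ∫ s in (0:ℝ)..(1:ℝ), max (c - quantileFn μ s) 0 :=
      intervalIntegral.integral_add_adjacent_intervals hGi
        (pospart_intervalIntegrable μ hμ c hqI h1I)
    have hnn : 0 ≤ ∫ s in q..(1:ℝ), max (c - quantileFn μ s) 0 :=
      intervalIntegral.integral_nonneg hq1 (fun s _ => le_max_right _ _)
    linarith
  rw [← pospart_integral_eq μ hμ c] at step3
  linarith

include hμ in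
lemma starEq {q : ℝ} (hq : 0 < q) (hq1 : q < 1) :
    ∫ s in (0:ℝ)..q, quantileFn μ s =
      q * quantileFn μ q - ∫ x, max (quantileFn μ q - x) 0 ∂μ := by
  set c := quantileFn μ q with hc
  have hqI : q ∈ Icc (0:ℝ) 1 := ⟨hq.le, hq1.le⟩
  have h0I : (0:ℝ) ∈ Icc (0:ℝ) 1 := ⟨le_refl 0, zero_le_one⟩
  have h1I : (1:ℝ) ∈ Icc (0:ℝ) 1 := ⟨zero_le_one, le_refl 1⟩
  have hQi := quantile_intervalIntegrable μ hμ h0I hqI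
  have hGi := pospart_intervalIntegrable μ hμ c h0I hqI
  -- on (q,1), the positive part vanishes a.e.
  have hright : ∫ s in q..(1:ℝ), max (c - quantileFn μ s) 0 = 0 := by
    rw [intervalIntegral.integral_of_le hq1.le]
    rw [show volume.restrict (Ioc q 1) = volume.restrict (Ioo q 1) from
      (Measure.restrict_congr_set Ioo_ae_eq_Ioc).symm]
    rw [setIntegral_congr_fun measurableSet_Ioo (g := fun _ => (0:ℝ)) ?_]
    · simp
    · intro s hs
      have hsmem : s ∈ Ioo (0:ℝ) 1 := ⟨lt_trans hq hs.1, hs.2⟩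
      have hqmem : q ∈ Ioo (0:ℝ) 1 := ⟨hq, hq1⟩
      have : c ≤ quantileFn μ s := quantile_monoOn μ hqmem hsmem hs.1.le
      simp only [max_eq_right_iff]
      linarith
  -- on (0,q), the positive part equals c - Q a.e.
  have hleft : ∫ s in (0:ℝ)..q, max (c - quantileFn μ s) 0 =
      ∫ s in (0:ℝ)..q, (c - quantileFn μ s) := by
    rw [intervalIntegral.integral_of_le hq.le, intervalIntegral.integral_of_le hq.le]
    rw [show volume.restrict (Ioc 0 q) = volume.restrict (Ioo 0 q) from
      (Measure.restrict_congr_set Ioo_ae_eq_Ioc).symm]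
    apply setIntegral_congr_fun measurableSet_Ioo
    intro s hs
    have hsmem : s ∈ Ioo (0:ℝ) 1 := ⟨hs.1, lt_trans hs.2 hq1⟩
    have hqmem : q ∈ Ioo (0:ℝ) 1 := ⟨hq, hq1⟩
    have : quantileFn μ s ≤ c := quantile_monoOn μ hsmem hqmem hs.2.le
    simp only [max_eq_left_iff]
    linarith
  have hsplit : (∫ s in (0:ℝ)..q, max (c - quantileFn μ s) 0) +
      ∫ s in q..(1:ℝ), max (c - quantileFn μ s) 0 =
      ∫ s in (0:ℝ)..(1:ℝ), max (c - quantileFn μ s) 0 :=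
    intervalIntegral.integral_add_adjacent_intervals hGi
      (pospart_intervalIntegrable μ hμ c hqI h1I)
  have hPP := pospart_integral_eq μ hμ c
  have hls : ∫ s in (0:ℝ)..q, (c - quantileFn μ s) =
      q * c - ∫ s in (0:ℝ)..q, quantileFn μ s := by
    rw [intervalIntegral.integral_sub intervalIntegrable_const hQi,
      intervalIntegral.integral_const]
    simp [mul_comm]
  rw [hright, add_zero, hleft, hls] at hsplit
  linarith [hPP, hsplit]


lemma intervalIntegrable_of_unif01 {g : ℝ → ℝ} (h : Integrable g unif01) {a b : ℝ}
    (ha : a ∈ Icc (0:ℝ) 1) (hb : b ∈ Icc (0:ℝ) 1) :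
    IntervalIntegrable g volume a b := by
  rw [intervalIntegrable_iff']
  have : IntegrableOn g (Icc (0:ℝ) 1) volume := h
  exact this.mono_set (uIcc_subset_Icc ha hb)

lemma quantile_map_le_of_monoOn {f : ℝ → ℝ} (hf : MonotoneOn f (Ioo (0:ℝ) 1))
    {s : ℝ} (hs : s ∈ Ioo (0:ℝ) 1) :
    quantileFn (Measure.map f unif01) s ≤ f s := by
  have hfae : AEMeasurable f unif01 := aemeasurable_of_monoOn_Ioo hf
  have hprob : IsProbabilityMeasure (Measure.map f unif01) := Measure.isProbabilityMeasure_map hfae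
  apply quantile_le_of_le_cdf _ hs.1
  rw [Measure.map_apply_of_aemeasurable hfae measurableSet_Iic]
  have hsub : Ioc (0:ℝ) s ⊆ f ⁻¹' Iic (f s) := by
    intro v hv
    simp only [mem_preimage, mem_Iic]
    exact hf ⟨hv.1, lt_of_le_of_lt hv.2 hs.2⟩ hs hv.2
  have h1 : ENNReal.ofReal s ≤ unif01 (f ⁻¹' Iic (f s)) := by
    calc ENNReal.ofReal s = unif01 (Ioc 0 s) := by
          rw [unif01, Measure.restrict_apply measurableSet_Ioc,
            inter_eq_left.mpr (Ioc_subset_Icc_self.trans (Icc_subset_Icc le_rfl hs.2.le)),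
            Real.volume_Ioc, sub_zero]
      _ ≤ _ := measure_mono hsub
  have hne : unif01 (f ⁻¹' Iic (f s)) ≠ ⊤ := measure_ne_top _ _
  calc s = (ENNReal.ofReal s).toReal := by rw [ENNReal.toReal_ofReal hs.1.le]
    _ ≤ (unif01 (f ⁻¹' Iic (f s))).toReal := ENNReal.toReal_mono hne h1


lemma posle (a b : ℝ) : max (a + b) 0 ≤ max a 0 + max b 0 :=
  max_le (add_le_add (le_max_left _ _) (le_max_left _ _))
    (add_nonneg (le_max_right _ _) (le_max_right _ _))

/-- for any coupling `(Y₀, Y₁)` of integrable marginals `μ₀, μ₁`,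
the difference `Δ = Y₁ − Y₀` SSD-dominates the countermonotonic treatment effect
`Δ⁻ ∼ Q₁(V) − Q₀(1−V)`, `V ∼ U[0,1]`: pointwise dominance of integrated quantile
functions on `[0,1]`. -/
theorem stmt_2 {Ω : Type*} [MeasurableSpace Ω] (P : Measure Ω) [IsProbabilityMeasure P]
    (μ₀ μ₁ : Measure ℝ) [IsProbabilityMeasure μ₀] [IsProbabilityMeasure μ₁]
    (h₀ : Integrable (fun x : ℝ => x) μ₀) (h₁ : Integrable (fun x : ℝ => x) μ₁)
    (Y₀ Y₁ : Ω → ℝ) (hY₀ : Measurable Y₀) (hY₁ : Measurable Y₁)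
    (hm₀ : P.map Y₀ = μ₀) (hm₁ : P.map Y₁ = μ₁) :
    ∀ q ∈ Set.Icc (0:ℝ) 1,
      iqf (Measure.map (fun v => quantileFn μ₁ v - quantileFn μ₀ (1 - v)) unif01) q ≤
        iqf (P.map (fun ω => Y₁ ω - Y₀ ω)) q := by
  intro q hq
  obtain ⟨hq0, hq1⟩ := hq
  set f : ℝ → ℝ := fun v => quantileFn μ₁ v - quantileFn μ₀ (1 - v) with hfdef
  have hfmono : MonotoneOn f (Ioo (0:ℝ) 1) := by
    intro a ha b hb hab
    have h1 : quantileFn μ₁ a ≤ quantileFn μ₁ b := quantile_monoOn μ₁ ha hb hab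
    have h0 : quantileFn μ₀ (1 - b) ≤ quantileFn μ₀ (1 - a) :=
      quantile_monoOn μ₀ ⟨by linarith [hb.2], by linarith [hb.1]⟩
        ⟨by linarith [ha.2], by linarith [ha.1]⟩ (by linarith)
    simp only [hfdef]
    linarith
  have hfae : AEMeasurable f unif01 := aemeasurable_of_monoOn_Ioo hfmono
  set ν := Measure.map f unif01 with hνdef
  have hprobν : IsProbabilityMeasure ν := Measure.isProbabilityMeasure_map hfae
  have hY₁int : Integrable Y₁ P := by
    have h₁' : Integrable (fun x : ℝ => x) (P.map Y₁) := by rw [hm₁]; exact h₁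
    exact (integrable_map_measure aestronglyMeasurable_id hY₁.aemeasurable).mp h₁'
  have hY₀int : Integrable Y₀ P := by
    have h₀' : Integrable (fun x : ℝ => x) (P.map Y₀) := by rw [hm₀]; exact h₀
    exact (integrable_map_measure aestronglyMeasurable_id hY₀.aemeasurable).mp h₀'
  have hΔmeas : Measurable (fun ω => Y₁ ω - Y₀ ω) := hY₁.sub hY₀
  have hΔint : Integrable (fun ω => Y₁ ω - Y₀ ω) P := hY₁int.sub hY₀int
  set μΔ := P.map (fun ω => Y₁ ω - Y₀ ω) with hμΔdef
  have hprobΔ : IsProbabilityMeasure μΔ := Measure.isProbabilityMeasure_map hΔmeas.aemeasurable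
  have hμΔint : Integrable (fun x : ℝ => x) μΔ :=
    (integrable_map_measure aestronglyMeasurable_id hΔmeas.aemeasurable).mpr hΔint
  have hQ1u : Integrable (quantileFn μ₁) unif01 := quantile_integrable μ₁ h₁
  have hQ0u : Integrable (quantileFn μ₀) unif01 := quantile_integrable μ₀ h₀
  have hQ0c : Integrable (fun v => quantileFn μ₀ (1 - v)) unif01 := by
    have h01 : IntervalIntegrable (quantileFn μ₀) volume 0 1 :=
      quantile_intervalIntegrable μ₀ h₀ ⟨le_rfl, zero_le_one⟩ ⟨zero_le_one, le_rfl⟩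
    have h2 : IntegrableOn (fun v => quantileFn μ₀ (1 - v)) (Icc (0:ℝ) 1) volume := by
      have h3 := (h01.comp_sub_left 1).symm
      rw [intervalIntegrable_iff'] at h3
      simpa using h3
    exact h2
  have hfu : Integrable f unif01 := hQ1u.sub hQ0c
  have hνint : Integrable (fun x : ℝ => x) ν :=
    (integrable_map_measure aestronglyMeasurable_id hfae).mpr hfu
  have hmean1 : ∫ x, x ∂μ₁ = ∫ ω, Y₁ ω ∂P := by
    rw [← hm₁]
    exact integral_map hY₁.aemeasurable aestronglyMeasurable_id
  have hmean0 : ∫ x, x ∂μ₀ = ∫ ω, Y₀ ω ∂P := by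
    rw [← hm₀]
    exact integral_map hY₀.aemeasurable aestronglyMeasurable_id
  rcases eq_or_lt_of_le hq0 with hq0' | hq0'
  · -- q = 0
    simp only [iqf, ← hq0', intervalIntegral.integral_same, le_refl]
  rcases eq_or_lt_of_le hq1 with hq1' | hq1'
  · -- q = 1
    subst hq1'
    have hL : iqf ν 1 = ∫ x, x ∂μ₁ - ∫ x, x ∂μ₀ := by
      simp only [iqf]
      rw [integral_quantile_mean ν hνint]
      have hmapν : ∫ x, x ∂ν = ∫ v, f v ∂unif01 := by
        rw [hνdef]
        exact integral_map hfae aestronglyMeasurable_id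
      rw [hmapν, hfdef]
      rw [integral_sub hQ1u hQ0c]
      have e1 : ∫ v, quantileFn μ₁ v ∂unif01 = ∫ x, x ∂μ₁ := by
        rw [integral_unif01_eq, integral_quantile_mean μ₁ h₁]
      have e0 : ∫ v, quantileFn μ₀ (1 - v) ∂unif01 = ∫ x, x ∂μ₀ := by
        rw [integral_unif01_eq (fun v => quantileFn μ₀ (1 - v)),
          intervalIntegral.integral_comp_sub_left (quantileFn μ₀) 1]
        norm_num
        rw [integral_quantile_mean μ₀ h₀]
      rw [e1, e0]
    have hR : iqf μΔ 1 = ∫ x, x ∂μ₁ - ∫ x, x ∂μ₀ := by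
      simp only [iqf]
      rw [integral_quantile_mean μΔ hμΔint]
      have : ∫ x, x ∂μΔ = ∫ ω, (Y₁ ω - Y₀ ω) ∂P := by
        rw [hμΔdef]
        exact integral_map hΔmeas.aemeasurable aestronglyMeasurable_id
      rw [this, integral_sub hY₁int hY₀int, hmean1, hmean0]
    rw [hL, hR]
  -- main case 0 < q < 1
  set c₁ := quantileFn μ₁ q with hc₁
  set c₀ := quantileFn μ₀ (1 - q) with hc₀
  have h0I : (0:ℝ) ∈ Icc (0:ℝ) 1 := ⟨le_rfl, zero_le_one⟩
  have h1I : (1:ℝ) ∈ Icc (0:ℝ) 1 := ⟨zero_le_one, le_rfl⟩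
  have hqI : q ∈ Icc (0:ℝ) 1 := ⟨hq0, hq1⟩
  have hq'I : 1 - q ∈ Icc (0:ℝ) 1 := ⟨by linarith, by linarith⟩
  -- A : iqf ν q ≤ ∫_0^q f
  have hA : iqf ν q ≤ ∫ s in (0:ℝ)..q, f s := by
    simp only [iqf]
    rw [intervalIntegral.integral_of_le hq0, intervalIntegral.integral_of_le hq0]
    rw [show volume.restrict (Ioc 0 q) = volume.restrict (Ioo 0 q) from
      (Measure.restrict_congr_set Ioo_ae_eq_Ioc).symm]
    apply setIntegral_mono_on
    · exact (quantile_integrableOn ν hνint).mono_set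
        (fun x hx => ⟨hx.1.le, hx.2.le.trans hq1⟩)
    · have : IntegrableOn f (Icc (0:ℝ) 1) volume := hfu
      exact this.mono_set (fun x hx => ⟨hx.1.le, hx.2.le.trans hq1⟩)
    · exact measurableSet_Ioo
    · intro s hs
      exact quantile_map_le_of_monoOn hfmono ⟨hs.1, hs.2.trans hq1'⟩
  have hB : ∫ s in (0:ℝ)..q, f s =
      (∫ s in (0:ℝ)..q, quantileFn μ₁ s) - ∫ s in (0:ℝ)..q, quantileFn μ₀ (1 - s) :=
    intervalIntegral.integral_sub (quantile_intervalIntegrable μ₁ h₁ h0I hqI)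
      (intervalIntegrable_of_unif01 hQ0c h0I hqI)
  have hC : ∫ s in (0:ℝ)..q, quantileFn μ₀ (1 - s) =
      ∫ s in (1 - q)..(1:ℝ), quantileFn μ₀ s := by
    rw [intervalIntegral.integral_comp_sub_left (quantileFn μ₀) 1]
    norm_num
  have hD : (∫ s in (0:ℝ)..(1 - q), quantileFn μ₀ s) +
      ∫ s in (1 - q)..(1:ℝ), quantileFn μ₀ s = ∫ s in (0:ℝ)..(1:ℝ), quantileFn μ₀ s :=
    intervalIntegral.integral_add_adjacent_intervals
      (quantile_intervalIntegrable μ₀ h₀ h0I hq'I)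
      (quantile_intervalIntegrable μ₀ h₀ hq'I h1I)
  have hE := starEq μ₁ h₁ hq0' hq1'
  have hF := starEq μ₀ h₀ (show (0:ℝ) < 1 - q by linarith) (show 1 - q < 1 by linarith)
  have hG := integral_quantile_mean μ₀ h₀
  have hH := star μΔ hμΔint (c := c₁ - c₀) hq0' hq1
  -- transfers
  have hI1 : ∫ x, max (c₁ - x) 0 ∂μ₁ = ∫ ω, max (c₁ - Y₁ ω) 0 ∂P := by
    rw [← hm₁]
    exact integral_map hY₁.aemeasurable
      (((continuous_const.sub continuous_id).max continuous_const).aestronglyMeasurable)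
  have hI0 : ∫ x, max (c₀ - x) 0 ∂μ₀ = ∫ ω, max (c₀ - Y₀ ω) 0 ∂P := by
    rw [← hm₀]
    exact integral_map hY₀.aemeasurable
      (((continuous_const.sub continuous_id).max continuous_const).aestronglyMeasurable)
  have hIΔ : ∫ x, max (c₁ - c₀ - x) 0 ∂μΔ =
      ∫ ω, max (c₁ - c₀ - (Y₁ ω - Y₀ ω)) 0 ∂P := by
    rw [hμΔdef]
    exact integral_map hΔmeas.aemeasurable
      (((continuous_const.sub continuous_id).max continuous_const).aestronglyMeasurable)
  -- pointwise inequality integrated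
  have hint1 : Integrable (fun ω => max (c₁ - Y₁ ω) 0) P :=
    ((integrable_const c₁).sub hY₁int).pos_part
  have hint0 : Integrable (fun ω => max (c₀ - Y₀ ω) 0) P :=
    ((integrable_const c₀).sub hY₀int).pos_part
  have hint0' : Integrable (fun ω => Y₀ ω - c₀) P := hY₀int.sub (integrable_const c₀)
  have hint00 : Integrable (fun ω => max (c₀ - Y₀ ω) 0 + (Y₀ ω - c₀)) P := hint0.add hint0'
  have hintR : Integrable (fun ω => max (c₁ - Y₁ ω) 0 + (max (c₀ - Y₀ ω) 0 + (Y₀ ω - c₀))) P :=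
    hint1.add hint00
  have hintΔ : Integrable (fun ω => max (c₁ - c₀ - (Y₁ ω - Y₀ ω)) 0) P :=
    ((integrable_const (c₁ - c₀)).sub hΔint).pos_part
  have hJ : ∫ ω, max (c₁ - c₀ - (Y₁ ω - Y₀ ω)) 0 ∂P ≤
      (∫ ω, max (c₁ - Y₁ ω) 0 ∂P) + ((∫ ω, max (c₀ - Y₀ ω) 0 ∂P) +
        ((∫ ω, Y₀ ω ∂P) - c₀)) := by
    have hpt : ∀ ω, max (c₁ - c₀ - (Y₁ ω - Y₀ ω)) 0 ≤
        max (c₁ - Y₁ ω) 0 + (max (c₀ - Y₀ ω) 0 + (Y₀ ω - c₀)) := by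
      intro ω
      have h1 := posle (c₁ - Y₁ ω) (Y₀ ω - c₀)
      have h2 : max (c₀ - Y₀ ω) 0 + (Y₀ ω - c₀) = max (Y₀ ω - c₀) 0 := by
        rcases le_total (Y₀ ω) c₀ with h | h
        · rw [max_eq_left (by linarith), max_eq_right (by linarith)]
          ring
        · rw [max_eq_right (by linarith), max_eq_left (by linarith)]
          ring
      have h3 : c₁ - c₀ - (Y₁ ω - Y₀ ω) = (c₁ - Y₁ ω) + (Y₀ ω - c₀) := by ring
      rw [h3, h2]
      exact h1
    calc ∫ ω, max (c₁ - c₀ - (Y₁ ω - Y₀ ω)) 0 ∂P ≤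
        ∫ ω, (max (c₁ - Y₁ ω) 0 + (max (c₀ - Y₀ ω) 0 + (Y₀ ω - c₀))) ∂P :=
          integral_mono hintΔ hintR hpt
      _ = _ := by
          rw [integral_add hint1 hint00, integral_add hint0 hint0',
            integral_sub hY₀int (integrable_const c₀)]
          simp [measure_univ]
  -- assemble
  have hfinal : iqf ν q ≤ q * (c₁ - c₀) - ∫ x, max (c₁ - c₀ - x) 0 ∂μΔ := by
    rw [hIΔ]
    rw [hI1] at hE
    rw [hI0] at hF
    rw [hmean0] at hG
    calc iqf ν q ≤ ∫ s in (0:ℝ)..q, f s := hA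
      _ = (∫ s in (0:ℝ)..q, quantileFn μ₁ s) - ∫ s in (1 - q)..(1:ℝ), quantileFn μ₀ s := by
          rw [hB, hC]
      _ ≤ _ := by
          rw [hE]
          linarith [hJ, hD, hF, hG]
  calc iqf ν q ≤ q * (c₁ - c₀) - ∫ x, max (c₁ - c₀ - x) 0 ∂μΔ := hfinal
    _ ≤ iqf μΔ q := by
        simp only [iqf]
        exact hH
end

section
/- Area of uncertainty identity: let Δ⁻ be an integrable random variable with IQF I and mean L = I(1). Define on [p₀, p₁] (with p₀ < p₁) the functions ψ_l(p) = c + (p₁−p₀)·I((p−p₀)/(p₁−p₀)) and ψ_h(p) = c + (p₁−p₀)·L − (p₁−p₀)·I((p₁−p)/(p₁−p₀)) for a constant c. Then ∫_{p₀}^{p₁} [ψ_h(u) − ψ_l(u)] du = (p₁−p₀)² · Γ, where Γ = 2∫₀¹ [qL − I(q)] dq is the Gini mean difference of Δ⁻. -/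
open MeasureTheory ProbabilityTheory Set Filter Topology

section aux
variable (ν : Measure ℝ) [IsProbabilityMeasure ν]

lemma quantileFn_eq (s : ℝ) : quantileFn ν s = sInf {x : ℝ | s ≤ cdf ν x} := by
  simp_rw [quantileFn, cdf_eq_real, measureReal_def]

omit [IsProbabilityMeasure ν] in
lemma q_set_nonempty {s : ℝ} (hs : s < 1) : {x : ℝ | s ≤ cdf ν x}.Nonempty :=
  ((tendsto_cdf_atTop ν).eventually (eventually_ge_nhds hs)).exists

omit [IsProbabilityMeasure ν] in
lemma q_set_bddBelow {s : ℝ} (hs : 0 < s) : BddBelow {x : ℝ | s ≤ cdf ν x} := by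
  obtain ⟨x₀, hx₀⟩ := ((tendsto_cdf_atBot ν).eventually (eventually_lt_nhds hs)).exists
  refine ⟨x₀, fun y hy => ?_⟩
  by_contra h
  push_neg at h
  exact absurd (le_trans hy (monotone_cdf ν h.le)) (not_le.2 hx₀)

lemma quantileFn_le_iff {s x : ℝ} (h0 : 0 < s) (h1 : s < 1) :
    quantileFn ν s ≤ x ↔ s ≤ cdf ν x := by
  rw [quantileFn_eq]
  constructor
  · intro h
    have key : s ≤ cdf ν (sInf {x : ℝ | s ≤ cdf ν x}) := by
      set Q := sInf {x : ℝ | s ≤ cdf ν x} with hQ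
      have h1' : ∀ y ∈ Ioi Q, s ≤ cdf ν y := by
        intro y hy
        obtain ⟨z, hz, hzy⟩ := (csInf_lt_iff (q_set_bddBelow ν h0) (q_set_nonempty ν h1)).mp hy
        exact le_trans hz (monotone_cdf ν hzy.le)
      have h2' : Tendsto (cdf ν) (𝓝[>] Q) (𝓝 (cdf ν Q)) :=
        ((cdf ν).right_continuous Q).mono_left (nhdsWithin_mono _ Ioi_subset_Ici_self)
      exact ge_of_tendsto h2' (eventually_nhdsWithin_of_forall h1')
    exact key.trans (monotone_cdf ν h)
  · exact fun h => csInf_le (q_set_bddBelow ν h0) h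

lemma quantileFn_monoOn : MonotoneOn (quantileFn ν) (Ioo (0:ℝ) 1) := by
  intro s hs t ht hst
  rw [quantileFn_eq, quantileFn_eq]
  exact csInf_le_csInf (q_set_bddBelow ν hs.1) (q_set_nonempty ν ht.2)
    (fun x hx => le_trans hst hx)

lemma quantileFn_aemeasurable :
    AEMeasurable (quantileFn ν) (volume.restrict (Ioo (0:ℝ) 1)) :=
  aemeasurable_restrict_of_monotoneOn measurableSet_Ioo (quantileFn_monoOn ν)

/-- Probability integral transform: the quantile function pushes the uniform
distribution on `(0,1)` to `ν`. -/
lemma map_quantileFn :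
    Measure.map (quantileFn ν) (volume.restrict (Ioo (0:ℝ) 1)) = ν := by
  have hprob : IsProbabilityMeasure (volume.restrict (Ioo (0:ℝ) 1)) := ⟨by simp⟩
  have : IsProbabilityMeasure
      (Measure.map (quantileFn ν) (volume.restrict (Ioo (0:ℝ) 1))) :=
    Measure.isProbabilityMeasure_map (quantileFn_aemeasurable ν)
  refine Measure.ext_of_Iic _ _ (fun x => ?_)
  rw [Measure.map_apply_of_aemeasurable (quantileFn_aemeasurable ν) measurableSet_Iic,
    Measure.restrict_apply' measurableSet_Ioo]
  have hset : quantileFn ν ⁻¹' Iic x ∩ Ioo 0 1 = Ioo (0:ℝ) 1 ∩ Iic (cdf ν x) := by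
    ext s
    constructor
    · rintro ⟨h, hs⟩
      exact ⟨hs, (quantileFn_le_iff ν hs.1 hs.2).mp h⟩
    · rintro ⟨hs, h⟩
      exact ⟨(quantileFn_le_iff ν hs.1 hs.2).mpr h, hs⟩
  rw [hset, ← ofReal_cdf ν x]
  rcases lt_or_ge (cdf ν x) 1 with h1 | h1
  · have : Ioo (0:ℝ) 1 ∩ Iic (cdf ν x) = Ioc 0 (cdf ν x) := by
      ext s
      exact ⟨fun ⟨⟨h0, _⟩, hy⟩ => ⟨h0, hy⟩,
        fun ⟨h0, hy⟩ => ⟨⟨h0, lt_of_le_of_lt hy h1⟩, hy⟩⟩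
    rw [this, Real.volume_Ioc, sub_zero]
  · have h1' : cdf ν x = 1 := le_antisymm (cdf_le_one ν x) h1
    have : Ioo (0:ℝ) 1 ∩ Iic (cdf ν x) = Ioo (0:ℝ) 1 := by
      rw [h1', inter_eq_left]
      exact fun s hs => hs.2.le
    rw [this, Real.volume_Ioo, h1']
    norm_num

lemma quantileFn_integrableOn (hν : Integrable (fun x : ℝ => x) ν) :
    IntegrableOn (quantileFn ν) (Ioo (0:ℝ) 1) := by
  rw [← map_quantileFn ν] at hν
  have := (integrable_map_measure measurable_id.aestronglyMeasurable
    (quantileFn_aemeasurable ν)).mp hν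
  simpa [Function.comp, IntegrableOn] using this

lemma iqf_continuousOn (hν : Integrable (fun x : ℝ => x) ν) :
    ContinuousOn (iqf ν) (Icc (0:ℝ) 1) := by
  have h : IntegrableOn (quantileFn ν) (uIcc (0:ℝ) 1) := by
    rw [uIcc_of_le zero_le_one, IntegrableOn,
      ← Measure.restrict_congr_set Ioo_ae_eq_Icc]
    exact quantileFn_integrableOn ν hν
  have := intervalIntegral.continuousOn_primitive_interval (a := 0) (b := 1) h
  rwa [uIcc_of_le zero_le_one] at this

end aux

/-- area of uncertainty identity: with `I` the IQF of `Δ⁻`,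
`L = I(1)`, `ψ_l(p) = c + (p₁−p₀)·I((p−p₀)/(p₁−p₀))`,
`ψ_h(p) = c + (p₁−p₀)·L − (p₁−p₀)·I((p₁−p)/(p₁−p₀))`, one has
`∫_{p₀}^{p₁} [ψ_h − ψ_l] = (p₁−p₀)² · Γ`, `Γ = 2∫₀¹ [qL − I(q)] dq`. -/
theorem stmt_10 (ν : Measure ℝ) [IsProbabilityMeasure ν]
    (hν : Integrable (fun x : ℝ => x) ν)
    (p₀ p₁ c : ℝ) (hp : p₀ < p₁) :
    (∫ u in p₀..p₁,
        ((c + (p₁ - p₀) * iqf ν 1 - (p₁ - p₀) * iqf ν ((p₁ - u) / (p₁ - p₀))) -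
          (c + (p₁ - p₀) * iqf ν ((u - p₀) / (p₁ - p₀))))) =
      (p₁ - p₀) ^ 2 * (2 * ∫ q in (0:ℝ)..1, (q * iqf ν 1 - iqf ν q)) := by
  have hcont := iqf_continuousOn ν hν
  set d := p₁ - p₀ with hd
  have hdpos : 0 < d := sub_pos.2 hp
  have hd0 : d ≠ 0 := hdpos.ne'
  set L := iqf ν 1 with hL
  set I := iqf ν with hI
  -- step 1: pointwise rewrite of the integrand
  have h1 : ∀ u, (c + d * L - d * I ((p₁ - u) / d)) - (c + d * I ((u - p₀) / d))
      = d * (L - I (1 - (u - p₀) / d) - I ((u - p₀) / d)) := by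
    intro u
    have h : (p₁ - u) / d = 1 - (u - p₀) / d := by
      field_simp
      ring
    rw [h]; ring
  rw [intervalIntegral.integral_congr (g := fun u =>
      d * (L - I (1 - (u - p₀) / d) - I ((u - p₀) / d))) (fun u _ => h1 u)]
  -- step 2: translate
  have h2 : (∫ u in p₀..p₁, d * (L - I (1 - (u - p₀) / d) - I ((u - p₀) / d)))
      = ∫ x in (0:ℝ)..d, d * (L - I (1 - x / d) - I (x / d)) := by
    have := intervalIntegral.integral_comp_sub_right
      (a := p₀) (b := p₁) (fun x => d * (L - I (1 - x / d) - I (x / d))) p₀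
    simpa using this
  rw [h2]
  -- step 3: rescale
  have h3 : (∫ x in (0:ℝ)..d, d * (L - I (1 - x / d) - I (x / d)))
      = d • ∫ q in (0:ℝ)..1, d * (L - I (1 - q) - I q) := by
    have := intervalIntegral.integral_comp_div (a := 0) (b := d)
      (fun q => d * (L - I (1 - q) - I q)) hd0
    simpa [div_self hd0] using this
  rw [h3]
  -- integrability facts
  have hIint : IntervalIntegrable I volume 0 1 := by
    apply ContinuousOn.intervalIntegrable
    rw [uIcc_of_le (zero_le_one' ℝ)]
    exact hcont
  have hIrefl : IntervalIntegrable (fun q => I (1 - q)) volume 0 1 := by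
    apply ContinuousOn.intervalIntegrable
    rw [uIcc_of_le (zero_le_one' ℝ)]
    apply hcont.comp ((continuous_const.sub continuous_id).continuousOn)
    intro q hq
    simp only [mem_Icc] at hq
    simp only [id_eq, mem_Icc, Pi.sub_apply]
    constructor <;> linarith
  -- step 4: linearity computations
  have hrefl : (∫ q in (0:ℝ)..1, I (1 - q)) = ∫ q in (0:ℝ)..1, I q := by
    have := intervalIntegral.integral_comp_sub_left (a := 0) (b := 1) I 1
    simpa using this
  have hleft : (∫ q in (0:ℝ)..1, (L - I (1 - q) - I q))
      = L - 2 * ∫ q in (0:ℝ)..1, I q := by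
    rw [intervalIntegral.integral_sub ((intervalIntegrable_const).sub hIrefl) hIint,
      intervalIntegral.integral_sub intervalIntegrable_const hIrefl,
      intervalIntegral.integral_const, hrefl]
    ring_nf
  have hright : (∫ q in (0:ℝ)..1, (q * L - I q))
      = L / 2 - ∫ q in (0:ℝ)..1, I q := by
    rw [intervalIntegral.integral_sub (by
        apply Continuous.intervalIntegrable; continuity) hIint]
    have : (∫ q in (0:ℝ)..1, q * L) = L / 2 := by
      simp [intervalIntegral.integral_mul_const, integral_id]
      ring
    rw [this]
  have hpull : (∫ q in (0:ℝ)..1, d * (L - I (1 - q) - I q))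
      = d * (L - 2 * ∫ q in (0:ℝ)..1, I q) := by
    rw [intervalIntegral.integral_const_mul, hleft]
  rw [hpull, hright]
  simp only [smul_eq_mul]
  ring
end

section
/- First counter-example to sufficiency of the SSD bounds: let Y₀, Y₁ be independent with P(Y_d = 0) = P(Y_d = 1) = 1/2 for d = 0,1. The distribution F₁ on [−1,1] given by F₁(δ) = 1/3 for δ ∈ [−1, 1/2) and F₁(δ) = 1 for δ ∈ [1/2, 1] satisfies the second-order bounds Δ⁻ ⪯_SSD F₁ ⪯_SSD Δ⁺ (where Δ⁻ and Δ⁺ are the counter- and co-monotonic differences of the marginals), yet F₁ is not the distribution of Ŷ₁ − Ŷ₀ for any coupling (Ŷ₀, Ŷ₁) with these marginals, because any such difference is supported on {−1, 0, 1} while F₁ puts mass 2/3 on {1/2}. -/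
open MeasureTheory ProbabilityTheory Set

/-- Bernoulli(1/2) law on `{0,1} ⊆ ℝ`. -/
noncomputable def bern : Measure ℝ :=
  (1/2 : ENNReal) • Measure.dirac (0:ℝ) + (1/2 : ENNReal) • Measure.dirac (1:ℝ)

/-- The distribution `F₁`: mass 1/3 at −1, mass 2/3 at 1/2. -/
noncomputable def nuF1 : Measure ℝ :=
  (1/3 : ENNReal) • Measure.dirac (-1 : ℝ) + (2/3 : ENNReal) • Measure.dirac (1/2 : ℝ)

/-- The countermonotonic difference `Δ⁻`: mass 1/2 at −1 and at 1. -/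
noncomputable def nuMinus : Measure ℝ :=
  (1/2 : ENNReal) • Measure.dirac (-1 : ℝ) + (1/2 : ENNReal) • Measure.dirac (1:ℝ)

/-- The comonotonic difference `Δ⁺`: point mass at 0. -/
noncomputable def nuPlus : Measure ℝ := Measure.dirac (0:ℝ)

lemma two_dirac_cdf (a b : ENNReal) (p r x : ℝ) (hab : a + b ≠ ⊤) :
    (((a • Measure.dirac p + b • Measure.dirac r) : Measure ℝ) (Set.Iic x)).toReal =
    (if p ≤ x then a.toReal else 0) + (if r ≤ x then b.toReal else 0) := by
  have ha : a ≠ ⊤ := fun h => hab (by simp [h])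
  have hb : b ≠ ⊤ := fun h => hab (by simp [h])
  simp only [Measure.coe_add, Measure.coe_smul, Pi.add_apply, Pi.smul_apply,
    Measure.dirac_apply' _ measurableSet_Iic, Set.indicator_apply, mem_Iic, smul_eq_mul,
    Pi.one_apply, mul_ite, mul_one, mul_zero]
  rw [ENNReal.toReal_add (by split_ifs <;> simp [ha]) (by split_ifs <;> simp [hb])]
  split_ifs <;> simp

lemma cdf_nuMinus (x : ℝ) : (nuMinus (Set.Iic x)).toReal =
    if 1 ≤ x then 1 else if -1 ≤ x then 1/2 else 0 := by
  rw [nuMinus, two_dirac_cdf _ _ _ _ _ (by norm_num)]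
  split_ifs <;>
    first
    | (norm_num [ENNReal.toReal_inv]; done)
    | (exfalso; linarith)
    | norm_num [ENNReal.toReal_inv]

lemma cdf_nuF1 (x : ℝ) : (nuF1 (Set.Iic x)).toReal =
    if 1/2 ≤ x then 1 else if -1 ≤ x then 1/3 else 0 := by
  rw [nuF1, two_dirac_cdf _ _ _ _ _ (ENNReal.add_ne_top.2 ⟨by norm_num, (ENNReal.div_lt_top (by norm_num) (by norm_num)).ne⟩)]
  split_ifs <;>
    first
    | (norm_num [ENNReal.toReal_inv, ENNReal.toReal_div]; done)
    | (exfalso; linarith)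
    | norm_num [ENNReal.toReal_inv, ENNReal.toReal_div]

lemma cdf_nuPlus (x : ℝ) : (nuPlus (Set.Iic x)).toReal =
    if 0 ≤ x then 1 else 0 := by
  rw [nuPlus, Measure.dirac_apply' _ measurableSet_Iic, Set.indicator_apply]
  simp only [mem_Iic]
  split_ifs <;> simp

lemma qf_eq {μ : Measure ℝ} {s a : ℝ}
    (hset : {x : ℝ | s ≤ (μ (Set.Iic x)).toReal} = Set.Ici a) : quantileFn μ s = a := by
  rw [quantileFn, hset, csInf_Ici]

lemma qf_nuMinus_lo {s : ℝ} (h0 : 0 < s) (h1 : s ≤ 1/2) : quantileFn nuMinus s = -1 := by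
  apply qf_eq; ext x
  simp only [mem_setOf_eq, mem_Ici, cdf_nuMinus]
  split_ifs with ha hb <;> constructor <;> intro h <;> linarith

lemma qf_nuMinus_hi {s : ℝ} (h0 : 1/2 < s) (h1 : s ≤ 1) : quantileFn nuMinus s = 1 := by
  apply qf_eq; ext x
  simp only [mem_setOf_eq, mem_Ici, cdf_nuMinus]
  split_ifs with ha hb <;> constructor <;> intro h <;> linarith

lemma qf_nuF1_lo {s : ℝ} (h0 : 0 < s) (h1 : s ≤ 1/3) : quantileFn nuF1 s = -1 := by
  apply qf_eq; ext x
  simp only [mem_setOf_eq, mem_Ici, cdf_nuF1]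
  split_ifs with ha hb <;> constructor <;> intro h <;> linarith

lemma qf_nuF1_hi {s : ℝ} (h0 : 1/3 < s) (h1 : s ≤ 1) : quantileFn nuF1 s = 1/2 := by
  apply qf_eq; ext x
  simp only [mem_setOf_eq, mem_Ici, cdf_nuF1]
  split_ifs with ha hb <;> constructor <;> intro h <;> linarith

lemma qf_nuPlus {s : ℝ} (h0 : 0 < s) (h1 : s ≤ 1) : quantileFn nuPlus s = 0 := by
  apply qf_eq; ext x
  simp only [mem_setOf_eq, mem_Ici, cdf_nuPlus]
  split_ifs with ha <;> constructor <;> intro h <;> linarith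

lemma intervalIntegral_const_on {f : ℝ → ℝ} {a b c : ℝ} (hab : a ≤ b)
    (h : ∀ s ∈ Set.Ioc a b, f s = c) : ∫ s in a..b, f s = (b - a) * c := by
  rw [intervalIntegral.integral_of_le hab,
    setIntegral_congr_fun measurableSet_Ioc (g := fun _ => c) h, setIntegral_const,
    Real.volume_real_Ioc_of_le hab, smul_eq_mul]

lemma intervalIntegrable_const_on {f : ℝ → ℝ} {a b c : ℝ} (hab : a ≤ b)
    (h : ∀ s ∈ Set.Ioc a b, f s = c) : IntervalIntegrable f volume a b := by
  rw [intervalIntegrable_iff_integrableOn_Ioc_of_le hab]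
  exact (integrableOn_const measure_Ioc_lt_top.ne).congr_fun
    (fun s hs => (h s hs).symm) measurableSet_Ioc

lemma iqf_nuPlus {q : ℝ} (h0 : 0 ≤ q) (h1 : q ≤ 1) : iqf nuPlus q = 0 := by
  rw [iqf, intervalIntegral_const_on h0 (fun s hs => qf_nuPlus hs.1 (le_trans hs.2 h1))]
  ring

lemma iqf_nuMinus {q : ℝ} (h0 : 0 ≤ q) (h1 : q ≤ 1) :
    iqf nuMinus q = if q ≤ 1/2 then -q else q - 1 := by
  split_ifs with hq
  · rw [iqf, intervalIntegral_const_on h0 (fun s hs => qf_nuMinus_lo hs.1 (le_trans hs.2 hq))]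
    ring
  · push_neg at hq
    rw [iqf, ← intervalIntegral.integral_add_adjacent_intervals (b := 1/2)
      (intervalIntegrable_const_on (by norm_num) (fun s hs => qf_nuMinus_lo hs.1 hs.2))
      (intervalIntegrable_const_on hq.le (fun s hs => qf_nuMinus_hi hs.1 (le_trans hs.2 h1))),
      intervalIntegral_const_on (by norm_num) (fun s hs => qf_nuMinus_lo hs.1 hs.2),
      intervalIntegral_const_on hq.le (fun s hs => qf_nuMinus_hi hs.1 (le_trans hs.2 h1))]
    ring

lemma iqf_nuF1 {q : ℝ} (h0 : 0 ≤ q) (h1 : q ≤ 1) :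
    iqf nuF1 q = if q ≤ 1/3 then -q else q/2 - 1/2 := by
  split_ifs with hq
  · rw [iqf, intervalIntegral_const_on h0 (fun s hs => qf_nuF1_lo hs.1 (le_trans hs.2 hq))]
    ring
  · push_neg at hq
    rw [iqf, ← intervalIntegral.integral_add_adjacent_intervals (b := 1/3)
      (intervalIntegrable_const_on (by norm_num) (fun s hs => qf_nuF1_lo hs.1 hs.2))
      (intervalIntegrable_const_on hq.le (fun s hs => qf_nuF1_hi hs.1 (le_trans hs.2 h1))),
      intervalIntegral_const_on (by norm_num) (fun s hs => qf_nuF1_lo hs.1 hs.2),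
      intervalIntegral_const_on hq.le (fun s hs => qf_nuF1_hi hs.1 (le_trans hs.2 h1))]
    ring

lemma bern' : bern (({0,1} : Set ℝ)ᶜ) = 0 := by
  rw [bern]
  have hs : MeasurableSet (({0,1} : Set ℝ)ᶜ) :=
    ((measurableSet_singleton (0:ℝ)).union (measurableSet_singleton 1)).compl
  simp only [Measure.coe_add, Measure.coe_smul, Pi.add_apply, Pi.smul_apply,
    Measure.dirac_apply' _ hs, Set.indicator_apply, mem_compl_iff, mem_insert_iff,
    mem_singleton_iff]
  norm_num


/-- first counter-example: `F₁` satisfies the second-order bounds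
`Δ⁻ ⪯_SSD F₁ ⪯_SSD Δ⁺` (IQF ordering on `[0,1]`), yet `F₁` is not the law of
`Y₁ − Y₀` for any coupling of two Bernoulli(1/2) marginals. -/
theorem stmt_13 :
    (∀ q ∈ Set.Icc (0:ℝ) 1, iqf nuMinus q ≤ iqf nuF1 q ∧ iqf nuF1 q ≤ iqf nuPlus q) ∧
      ¬ ∃ (Ω : Type) (mΩ : MeasurableSpace Ω) (P : Measure Ω),
          IsProbabilityMeasure P ∧
          ∃ Y₀ Y₁ : Ω → ℝ, Measurable Y₀ ∧ Measurable Y₁ ∧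
            P.map Y₀ = bern ∧ P.map Y₁ = bern ∧
            P.map (fun ω => Y₁ ω - Y₀ ω) = nuF1 := by
  constructor
  · rintro q ⟨h0, h1⟩
    rw [iqf_nuMinus h0 h1, iqf_nuF1 h0 h1, iqf_nuPlus h0 h1]
    split_ifs <;> constructor <;> linarith
  · rintro ⟨Ω, mΩ, P, hP, Y₀, Y₁, hm0, hm1, h0, h1, hmap⟩
    have hs : MeasurableSet (({0,1} : Set ℝ)ᶜ) :=
      ((measurableSet_singleton (0:ℝ)).union (measurableSet_singleton 1)).compl
    have hY0 : P (Y₀ ⁻¹' (({0,1} : Set ℝ)ᶜ)) = 0 := by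
      rw [← Measure.map_apply hm0 hs, h0]; exact bern'
    have hY1 : P (Y₁ ⁻¹' (({0,1} : Set ℝ)ᶜ)) = 0 := by
      rw [← Measure.map_apply hm1 hs, h1]; exact bern'
    have key : (fun ω => Y₁ ω - Y₀ ω) ⁻¹' {(1/2 : ℝ)} ⊆
        Y₀ ⁻¹' (({0,1} : Set ℝ)ᶜ) ∪ Y₁ ⁻¹' (({0,1} : Set ℝ)ᶜ) := by
      intro ω hω
      simp only [mem_preimage, mem_singleton_iff] at hω
      by_contra hc
      simp only [mem_union, mem_preimage, mem_compl_iff, not_or, not_not] at hc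
      obtain ⟨hc0, hc1⟩ := hc
      simp only [mem_insert_iff, mem_singleton_iff] at hc0 hc1
      rcases hc0 with h | h <;> rcases hc1 with h' | h' <;> rw [h, h'] at hω <;> norm_num at hω
    have hz : P ((fun ω => Y₁ ω - Y₀ ω) ⁻¹' {(1/2 : ℝ)}) = 0 :=
      measure_mono_null key (measure_union_null hY0 hY1)
    have : nuF1 {(1/2 : ℝ)} = 0 := by
      rw [← hmap, Measure.map_apply (f := fun ω => Y₁ ω - Y₀ ω) (hm1.sub hm0) (measurableSet_singleton _)]
      exact hz
    rw [nuF1] at this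
    simp only [Measure.coe_add, Measure.coe_smul, Pi.add_apply, Pi.smul_apply,
      Measure.dirac_apply' _ (measurableSet_singleton (1/2:ℝ)), Set.indicator_apply,
      mem_singleton_iff] at this
    norm_num at this
end

section
/- Rank similarity implies conditional comonotonic representation: suppose Y_d = Q_{Y_d}(V_d) for d = 0,1 where V₀, V₁ ∈ [0,1] are random variables that are identically distributed conditional on a σ-algebra G. Then E[Y₁ − Y₀ | G] = E[Q_{Y₁}(V₀) − Q_{Y₀}(V₀) | G] almost surely, provided all quantities are integrable; i.e., the conditional mean treatment effect equals the conditional mean of the comonotonic-rank treatment effect Δ⁺ = Q_{Y₁}(V₀) − Q_{Y₀}(V₀). -/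
open MeasureTheory ProbabilityTheory Set

lemma measurable_quantileFn (μ : Measure ℝ) : Measurable (quantileFn μ) := by
  set S : ℝ → Set ℝ := fun q => {x : ℝ | q ≤ (μ (Set.Iic x)).toReal} with hS
  have hSanti : ∀ {q q' : ℝ}, q ≤ q' → S q' ⊆ S q := fun h x hx => le_trans h hx
  set L : Set ℝ := {q | ¬ BddBelow (S q)} with hL
  set U : Set ℝ := {q | ¬ (S q).Nonempty} with hU
  have hLlow : ∀ {q q' : ℝ}, q' ≤ q → q ∈ L → q' ∈ L := by
    intro q q' h hq hbdd
    exact hq (hbdd.mono (hSanti h))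
  have hUup : ∀ {q q' : ℝ}, q ≤ q' → q ∈ U → q' ∈ U := by
    intro q q' h hq hne
    exact hq (hne.mono (hSanti h))
  have hLm : MeasurableSet L :=
    (ordConnected_def.mpr fun x hx y hy z hz => hLlow hz.2 hy).measurableSet
  have hUm : MeasurableSet U :=
    (ordConnected_def.mpr fun x hx y hy z hz => hUup hz.1 hx).measurableSet
  have hT0 : ∀ q ∈ L ∪ U, quantileFn μ q = 0 := by
    intro q hq
    rcases hq with h | h
    · exact Real.sInf_of_not_bddBelow h
    · show sInf (S q) = 0
      rw [Set.not_nonempty_iff_eq_empty.mp h, Real.sInf_empty]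
  apply measurable_of_Iic
  intro t
  have hsplit : quantileFn μ ⁻¹' Set.Iic t
      = (quantileFn μ ⁻¹' Set.Iic t ∩ (L ∪ U))
        ∪ (quantileFn μ ⁻¹' Set.Iic t ∩ (L ∪ U)ᶜ) :=
    (Set.inter_union_compl _ _).symm
  rw [hsplit]
  apply MeasurableSet.union
  · -- on (L ∪ U), quantileFn = 0
    by_cases ht : (0 : ℝ) ≤ t
    · have : quantileFn μ ⁻¹' Set.Iic t ∩ (L ∪ U) = L ∪ U := by
        apply Set.inter_eq_self_of_subset_right
        intro q hq
        simp only [Set.mem_preimage, Set.mem_Iic, hT0 q hq]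
        exact ht
      rw [this]; exact hLm.union hUm
    · have : quantileFn μ ⁻¹' Set.Iic t ∩ (L ∪ U) = ∅ := by
        ext q
        simp only [Set.mem_inter_iff, Set.mem_preimage, Set.mem_Iic, Set.mem_empty_iff_false,
          iff_false, not_and]
        intro hle hq
        rw [hT0 q hq] at hle
        exact ht hle
      rw [this]; exact MeasurableSet.empty
  · -- on (L ∪ U)ᶜ, quantileFn is monotone, so this set is ordConnected
    refine (ordConnected_def.mpr fun x hx y hy z hz => ?_).measurableSet
    have hxL : x ∉ L := fun h => hx.2 (Or.inl h)
    have hyU : y ∉ U := fun h => hy.2 (Or.inr h)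
    have hzbdd : BddBelow (S z) := by
      by_contra h
      exact hxL (hLlow hz.1 h)
    have hzne : (S z).Nonempty := by
      by_contra h
      exact hyU (hUup hz.2 h)
    have hybdd : BddBelow (S y) := hzbdd.mono (hSanti hz.2)
    have hyne : (S y).Nonempty := not_not.mp hyU
    constructor
    · -- quantileFn μ z ≤ t
      have h1 : sInf (S z) ≤ sInf (S y) := csInf_le_csInf hzbdd hyne (hSanti hz.2)
      exact Set.mem_Iic.mpr (le_trans h1 hy.1)
    · intro h
      rcases h with h | h
      · exact hxL (hLlow hz.1 h)
      · exact hyU (hUup hz.2 h)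

/-- rank similarity implies the conditional comonotonic
representation: if `Y_d = Q_{Y_d}(V_d)` a.s. and `V₀, V₁` are identically
distributed conditional on the σ-algebra `𝒢`, then
`E[Y₁ − Y₀ | 𝒢] = E[Q_{Y₁}(V₀) − Q_{Y₀}(V₀) | 𝒢]` almost surely. -/
theorem stmt_17 {Ω : Type*} {𝒢 : MeasurableSpace Ω} [mΩ : MeasurableSpace Ω]
    (P : Measure Ω) [IsProbabilityMeasure P] (h𝒢 : 𝒢 ≤ mΩ)
    (Y₀ Y₁ V₀ V₁ : Ω → ℝ)
    (hY₀m : Measurable Y₀) (hY₁m : Measurable Y₁)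
    (hV₀m : Measurable V₀) (hV₁m : Measurable V₁)
    (hY₀i : Integrable Y₀ P) (hY₁i : Integrable Y₁ P)
    (hQ₀i : Integrable (fun ω => quantileFn (P.map Y₀) (V₀ ω)) P)
    (hQ₁i : Integrable (fun ω => quantileFn (P.map Y₁) (V₀ ω)) P)
    (hsk₀ : Y₀ =ᵐ[P] fun ω => quantileFn (P.map Y₀) (V₀ ω))
    (hsk₁ : Y₁ =ᵐ[P] fun ω => quantileFn (P.map Y₁) (V₁ ω))
    (hrs : ∀ f : ℝ → ℝ, Measurable f →
        Integrable (fun ω => f (V₀ ω)) P → Integrable (fun ω => f (V₁ ω)) P →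
        P[(fun ω => f (V₀ ω)) | 𝒢] =ᵐ[P] P[(fun ω => f (V₁ ω)) | 𝒢]) :
    P[(fun ω => Y₁ ω - Y₀ ω) | 𝒢] =ᵐ[P]
      P[(fun ω => quantileFn (P.map Y₁) (V₀ ω) - quantileFn (P.map Y₀) (V₀ ω)) | 𝒢] := by
  have hQ₁m : Measurable (quantileFn (P.map Y₁)) := measurable_quantileFn _
  have hQ₁V₁i : Integrable (fun ω => quantileFn (P.map Y₁) (V₁ ω)) P :=
    hY₁i.congr hsk₁
  have h1 : P[(fun ω => quantileFn (P.map Y₁) (V₀ ω)) | 𝒢] =ᵐ[P]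
      P[(fun ω => quantileFn (P.map Y₁) (V₁ ω)) | 𝒢] :=
    hrs _ hQ₁m hQ₁i hQ₁V₁i
  have h2 : P[(fun ω => Y₁ ω - Y₀ ω) | 𝒢] =ᵐ[P] P[Y₁ | 𝒢] - P[Y₀ | 𝒢] :=
    condExp_sub hY₁i hY₀i _
  have h3 : P[Y₁ | 𝒢] =ᵐ[P] P[(fun ω => quantileFn (P.map Y₁) (V₁ ω)) | 𝒢] :=
    condExp_congr_ae hsk₁
  have h4 : P[Y₀ | 𝒢] =ᵐ[P] P[(fun ω => quantileFn (P.map Y₀) (V₀ ω)) | 𝒢] :=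
    condExp_congr_ae hsk₀
  have h5 : P[(fun ω => quantileFn (P.map Y₁) (V₀ ω) - quantileFn (P.map Y₀) (V₀ ω)) | 𝒢]
      =ᵐ[P] P[(fun ω => quantileFn (P.map Y₁) (V₀ ω)) | 𝒢]
        - P[(fun ω => quantileFn (P.map Y₀) (V₀ ω)) | 𝒢] :=
    condExp_sub hQ₁i hQ₀i _
  filter_upwards [h1, h2, h3, h4, h5] with ω h1 h2 h3 h4 h5
  rw [h2, h5]
  simp only [Pi.sub_apply]
  rw [h3, h4, h1]
end
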